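/- Let H = H_A ⊗ H_B be the tensor product of two finite-dimensional complex inner product spaces, with factorized initial and final states ψ_i = ψ_i^A ⊗ ψ_i^B and ψ_f = ψ_f^A ⊗ ψ_f^B, factorized evolutions U_k = U_k^A ⊗ U_k^B for k = 1,…,n+1, and observables of the form A_k = X_k ⊗ I for k ∈ S_1 and A_k = I ⊗ Y_k for k ∈ S_2, where {1,…,n} is the disjoint union of S_1 and S_2. Assume D := ⟨ψ_f, M(∅) ψ_i⟩ ≠ 0. Then the observables indexed by S_1 and S_2 are weakly independent: w(T_1 ∪ T_2) = w(T_1)·w(T_2) for every T_1 ⊆ S_1 and T_2 ⊆ S_2. -/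

import Mathlib

open scoped TensorProduct

/-- The operator `M(S) = U_{n+1} B_n U_n ⋯ B_1 U_1` of a sequential weak measurement,
where `B_k = A_k` if `k ∈ S` and `B_k = 1` otherwise. -/
noncomputable def seqOp {H : Type*} [AddCommGroup H] [Module ℂ H] (n : ℕ)
    (A : Fin n → Module.End ℂ H) (U : Fin (n + 1) → Module.End ℂ H)
    (S : Finset (Fin n)) : Module.End ℂ H :=
  U (Fin.last n) *
    ((List.ofFn fun k : Fin n => (if k ∈ S then A k else 1) * U k.castSucc).reverse).prod

/-- The sesquilinear pairing `v ↦ ⟨ψ_f^A ⊗ ψ_f^B, v⟩` on the tensor product `H_A ⊗ H_B`,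
i.e. the unique linear map sending a pure tensor `a ⊗ b` to `⟨ψ_f^A, a⟩ · ⟨ψ_f^B, b⟩`
(this is the inner product against `ψ_f^A ⊗ ψ_f^B` for the natural inner product on the
tensor product of two inner product spaces). -/
noncomputable def tensorInnerPairing {HA HB : Type*}
    [NormedAddCommGroup HA] [InnerProductSpace ℂ HA]
    [NormedAddCommGroup HB] [InnerProductSpace ℂ HB] (ψfA : HA) (ψfB : HB) :
    HA ⊗[ℂ] HB →ₗ[ℂ] ℂ :=
  TensorProduct.lift <| LinearMap.mk₂ ℂ
    (fun a b => (inner ℂ ψfA a : ℂ) * (inner ℂ ψfB b : ℂ))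
    (fun a a' b => by simp [inner_add_right]; ring)
    (fun c a b => by simp [inner_smul_right]; ring)
    (fun a b b' => by simp [inner_add_right]; ring)
    (fun c a b => by simp [inner_smul_right]; ring)

lemma tmap_mul {HA HB : Type*} [AddCommGroup HA] [Module ℂ HA]
    [AddCommGroup HB] [Module ℂ HB]
    (f f' : Module.End ℂ HA) (g g' : Module.End ℂ HB) :
    TensorProduct.map f g * TensorProduct.map f' g' =
      TensorProduct.map (f * f') (g * g') := by
  simp only [Module.End.mul_eq_comp, TensorProduct.map_comp]

lemma tmap_one {HA HB : Type*} [AddCommGroup HA] [Module ℂ HA]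
    [AddCommGroup HB] [Module ℂ HB] :
    (TensorProduct.map (1 : Module.End ℂ HA) (1 : Module.End ℂ HB)) = 1 := by
  ext a b; simp

lemma tmap_list_prod {HA HB : Type*} [AddCommGroup HA] [Module ℂ HA]
    [AddCommGroup HB] [Module ℂ HB]
    (l : List (Module.End ℂ HA × Module.End ℂ HB)) :
    (l.map fun p => TensorProduct.map p.1 p.2).prod =
      TensorProduct.map (l.map Prod.fst).prod (l.map Prod.snd).prod := by
  induction l with
  | nil => simp [tmap_one]
  | cons p l ih => simp [ih, tmap_mul]

lemma seqOp_tensor {HA HB : Type*} [AddCommGroup HA] [Module ℂ HA]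
    [AddCommGroup HB] [Module ℂ HB] {n : ℕ}
    (S₁ S₂ : Finset (Fin n)) (hdisj : Disjoint S₁ S₂) (hunion : S₁ ∪ S₂ = Finset.univ)
    (X : Fin n → Module.End ℂ HA) (Y : Fin n → Module.End ℂ HB)
    (UA : Fin (n + 1) → Module.End ℂ HA) (UB : Fin (n + 1) → Module.End ℂ HB)
    (A : Fin n → Module.End ℂ (HA ⊗[ℂ] HB))
    (hA : ∀ k, A k = if k ∈ S₁ then TensorProduct.map (X k) LinearMap.id
      else TensorProduct.map LinearMap.id (Y k))
    (U : Fin (n + 1) → Module.End ℂ (HA ⊗[ℂ] HB))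
    (hU : ∀ k, U k = TensorProduct.map (UA k) (UB k))
    (T : Finset (Fin n)) :
    seqOp n A U T =
      TensorProduct.map (seqOp n X UA (T ∩ S₁)) (seqOp n Y UB (T ∩ S₂)) := by
  have hentry : ∀ k : Fin n, (if k ∈ T then A k else 1) * U k.castSucc =
      TensorProduct.map ((if k ∈ T ∩ S₁ then X k else 1) * UA k.castSucc)
        ((if k ∈ T ∩ S₂ then Y k else 1) * UB k.castSucc) := by
    intro k
    rw [hU, hA]
    by_cases hT : k ∈ T
    · by_cases h1 : k ∈ S₁
      · have h2 : k ∉ S₂ := Finset.disjoint_left.mp hdisj h1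
        simp only [hT, h1, h2, if_true, if_false, Finset.mem_inter, and_true, and_false, tmap_mul]
        norm_num [← Module.End.one_eq_id]
      · have h2 : k ∈ S₂ := by
          have := Finset.mem_union.mp (hunion ▸ Finset.mem_univ k)
          tauto
        simp only [hT, h1, h2, if_true, if_false, Finset.mem_inter, and_true, and_false, tmap_mul]
        norm_num [← Module.End.one_eq_id]
    · simp [hT, tmap_one, one_mul]
  unfold seqOp
  have hl : (List.ofFn fun k : Fin n => (if k ∈ T then A k else 1) * U k.castSucc) =
      (List.ofFn fun k : Fin n =>
        ((if k ∈ T ∩ S₁ then X k else 1) * UA k.castSucc,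
         (if k ∈ T ∩ S₂ then Y k else 1) * UB k.castSucc)).map
        fun p => TensorProduct.map p.1 p.2 := by
    rw [List.map_ofFn]
    exact congrArg List.ofFn (funext fun k => hentry k)
  rw [hl, hU, ← List.map_reverse, tmap_list_prod, tmap_mul]
  congr 1 <;> rw [List.map_reverse, List.map_ofFn] <;> rfl

/-- On `H = H_A ⊗ H_B`, with factorized initial and final states
`ψ_i = ψ_i^A ⊗ ψ_i^B`, `ψ_f = ψ_f^A ⊗ ψ_f^B`, factorized evolutions `U_k = U_k^A ⊗ U_k^B`,
and observables `A_k = X_k ⊗ I` for `k ∈ S₁` and `A_k = I ⊗ Y_k` for `k ∈ S₂`, where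
`{1,…,n} = S₁ ⊔ S₂`, and assuming `D = ⟨ψ_f, M(∅) ψ_i⟩ ≠ 0`, the observables indexed by
`S₁` and `S₂` are weakly independent: `w(T₁ ∪ T₂) = w(T₁)·w(T₂)` for all `T₁ ⊆ S₁`,
`T₂ ⊆ S₂`. -/
theorem weaklyIndependent_of_tensor_factorized
    {HA HB : Type*}
    [NormedAddCommGroup HA] [InnerProductSpace ℂ HA] [FiniteDimensional ℂ HA]
    [NormedAddCommGroup HB] [InnerProductSpace ℂ HB] [FiniteDimensional ℂ HB]
    {n : ℕ} (ψiA ψfA : HA) (ψiB ψfB : HB)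
    (S₁ S₂ : Finset (Fin n)) (hdisj : Disjoint S₁ S₂) (hunion : S₁ ∪ S₂ = Finset.univ)
    (X : Fin n → Module.End ℂ HA) (Y : Fin n → Module.End ℂ HB)
    (UA : Fin (n + 1) → Module.End ℂ HA) (UB : Fin (n + 1) → Module.End ℂ HB)
    (A : Fin n → Module.End ℂ (HA ⊗[ℂ] HB))
    (hA : ∀ k, A k = if k ∈ S₁ then TensorProduct.map (X k) LinearMap.id
      else TensorProduct.map LinearMap.id (Y k))
    (U : Fin (n + 1) → Module.End ℂ (HA ⊗[ℂ] HB))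
    (hU : ∀ k, U k = TensorProduct.map (UA k) (UB k))
    (w : Finset (Fin n) → ℂ)
    (hw : ∀ S, w S =
      tensorInnerPairing ψfA ψfB (seqOp n A U S (ψiA ⊗ₜ[ℂ] ψiB)) /
        tensorInnerPairing ψfA ψfB (seqOp n A U ∅ (ψiA ⊗ₜ[ℂ] ψiB)))
    (hD : tensorInnerPairing ψfA ψfB (seqOp n A U ∅ (ψiA ⊗ₜ[ℂ] ψiB)) ≠ 0) :
    ∀ T₁ ⊆ S₁, ∀ T₂ ⊆ S₂, w (T₁ ∪ T₂) = w T₁ * w T₂ := by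
  intro T₁ hT₁ T₂ hT₂
  set fA : Finset (Fin n) → ℂ := fun T => inner ℂ ψfA (seqOp n X UA T ψiA) with hfA
  set fB : Finset (Fin n) → ℂ := fun T => inner ℂ ψfB (seqOp n Y UB T ψiB) with hfB
  have key : ∀ T, tensorInnerPairing ψfA ψfB (seqOp n A U T (ψiA ⊗ₜ[ℂ] ψiB)) =
      fA (T ∩ S₁) * fB (T ∩ S₂) := by
    intro T
    rw [seqOp_tensor S₁ S₂ hdisj hunion X Y UA UB A hA U hU T]
    simp [tensorInnerPairing, hfA, hfB]
  have hempty : ∀ S : Finset (Fin n), (∅ : Finset (Fin n)) ∩ S = ∅ := fun S =>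
    Finset.empty_inter S
  rw [key, hempty, hempty] at hD
  obtain ⟨hDA, hDB⟩ := mul_ne_zero_iff.mp hD
  have i1 : (T₁ ∪ T₂) ∩ S₁ = T₁ := by
    rw [Finset.union_inter_distrib_right, Finset.inter_eq_left.mpr hT₁,
      Finset.disjoint_iff_inter_eq_empty.mp (hdisj.symm.mono_left hT₂),
      Finset.union_empty]
  have i2 : (T₁ ∪ T₂) ∩ S₂ = T₂ := by
    rw [Finset.union_inter_distrib_right, Finset.inter_eq_left.mpr hT₂,
      Finset.disjoint_iff_inter_eq_empty.mp (hdisj.mono_left hT₁), Finset.empty_union]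
  have i3 : T₁ ∩ S₁ = T₁ := Finset.inter_eq_left.mpr hT₁
  have i4 : T₁ ∩ S₂ = ∅ := Finset.disjoint_iff_inter_eq_empty.mp (hdisj.mono_left hT₁)
  have i5 : T₂ ∩ S₁ = ∅ :=
    Finset.disjoint_iff_inter_eq_empty.mp (hdisj.symm.mono_left hT₂)
  have i6 : T₂ ∩ S₂ = T₂ := Finset.inter_eq_left.mpr hT₂
  rw [hw, hw, hw, key, key, key, key, hempty, hempty, i1, i2, i3, i4, i5, i6]
  field_simp
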